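/- arXiv:1807.01732 — 4 statements merged into one kernel-verified Lean document; each statement's English description precedes it below -/
import Mathlib

section
/- Let (Ω, P) be a probability space, let W be an event with P(W) = q where 0 < q < 1, and let 0 < p_L < b < p_H ≤ 1. Set ε' = min(1/2, (1−q)·(b−p_L)/2). Let A be an event with P(A) > 0 such that P(A | W) ≤ ε' and P(A | Wᶜ) ≥ 1 − ε'. Then P(W | A)·p_H + P(Wᶜ | A)·p_L < b. -/
open MeasureTheory ProbabilityTheory

/-- Lemma 2 (posterior-expectation form): if `P(A|W) ≤ ε'` and `P(A|Wᶜ) ≥ 1 - ε'`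
with `ε' = min (1/2) ((1-q)(b - p_L)/2)`, then the posterior expected reward of the
risky arm conditional on `A` is strictly below the safe reward `b`. -/
theorem stmt_3 {Ω : Type*} [MeasurableSpace Ω] (μ : Measure Ω) [IsProbabilityMeasure μ]
    (W A : Set Ω) (hW : MeasurableSet W) (hA : MeasurableSet A)
    (q p_L p_H b : ℝ) (hq0 : 0 < q) (hq1 : q < 1)
    (hpL : 0 < p_L) (hpLb : p_L < b) (hbpH : b < p_H) (hpH : p_H ≤ 1)
    (hqW : μ W = ENNReal.ofReal q)
    (hApos : 0 < μ A)
    (hAW : μ[A | W] ≤ ENNReal.ofReal (min (1/2) ((1 - q) * (b - p_L) / 2)))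
    (hAWc : ENNReal.ofReal (1 - min (1/2) ((1 - q) * (b - p_L) / 2)) ≤ μ[A | Wᶜ]) :
    (μ[W | A]).toReal * p_H + (μ[Wᶜ | A]).toReal * p_L < b := by
  set ε : ℝ := min (1/2) ((1 - q) * (b - p_L) / 2) with hεdef
  have hε0 : 0 < ε := lt_min (by norm_num) (by nlinarith)
  have hεhalf : ε ≤ 1/2 := min_le_left _ _
  have hε2 : ε ≤ (1 - q) * (b - p_L) / 2 := min_le_right _ _
  have hWne : μ W ≠ 0 := by
    rw [hqW]; simp only [ne_eq, ENNReal.ofReal_eq_zero, not_le]; linarith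
  have hqWc : μ Wᶜ = ENNReal.ofReal (1 - q) := by
    rw [prob_compl_eq_one_sub hW, hqW, ENNReal.ofReal_sub 1 hq0.le, ENNReal.ofReal_one]
  have hWcne : μ Wᶜ ≠ 0 := by
    rw [hqWc]; simp only [ne_eq, ENNReal.ofReal_eq_zero, not_le]; linarith
  -- upper bound on μ (W ∩ A)
  have h1 : μ (W ∩ A) ≤ ENNReal.ofReal (ε * q) := by
    rw [cond_apply hW] at hAW
    have := mul_le_mul_right hAW (μ W)
    rw [← mul_assoc, ENNReal.mul_inv_cancel hWne (measure_ne_top μ W), one_mul] at this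
    calc μ (W ∩ A) ≤ μ W * ENNReal.ofReal ε := this
    _ = ENNReal.ofReal (ε * q) := by
        rw [hqW, ← ENNReal.ofReal_mul hq0.le, mul_comm]
  -- lower bound on μ (Wᶜ ∩ A)
  have h2 : ENNReal.ofReal ((1 - ε) * (1 - q)) ≤ μ (Wᶜ ∩ A) := by
    rw [cond_apply hW.compl] at hAWc
    have := mul_le_mul_right hAWc (μ Wᶜ)
    rw [← mul_assoc, ENNReal.mul_inv_cancel hWcne (measure_ne_top μ Wᶜ), one_mul] at this
    calc ENNReal.ofReal ((1 - ε) * (1 - q))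
        = μ Wᶜ * ENNReal.ofReal (1 - ε) := by
          rw [hqWc, ← ENNReal.ofReal_mul (by linarith), mul_comm]
    _ ≤ μ (Wᶜ ∩ A) := this
  set a1 : ℝ := (μ (W ∩ A)).toReal with ha1
  set a2 : ℝ := (μ (Wᶜ ∩ A)).toReal with ha2
  have ha1nn : 0 ≤ a1 := ENNReal.toReal_nonneg
  have ha2nn : 0 ≤ a2 := ENNReal.toReal_nonneg
  have hr1 : a1 ≤ ε * q := by
    have := ENNReal.toReal_mono ENNReal.ofReal_ne_top h1
    rwa [ENNReal.toReal_ofReal (by positivity)] at this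
  have hr2 : (1 - ε) * (1 - q) ≤ a2 := by
    have := ENNReal.toReal_mono (measure_ne_top μ _) h2
    rwa [ENNReal.toReal_ofReal (by nlinarith)] at this
  have hAsum : μ (W ∩ A) + μ (Wᶜ ∩ A) = μ A := by
    rw [Set.inter_comm W A, Set.inter_comm Wᶜ A, ← Set.diff_eq]
    exact measure_inter_add_diff A hW
  have haA : (μ A).toReal = a1 + a2 := by
    rw [← hAsum, ENNReal.toReal_add (measure_ne_top μ _) (measure_ne_top μ _)]
  have haApos : 0 < a1 + a2 := by
    rw [← haA]
    exact ENNReal.toReal_pos hApos.ne' (measure_ne_top μ A)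
  have hgW : (μ[W | A]).toReal = a1 / (a1 + a2) := by
    rw [cond_apply hA, ENNReal.toReal_mul, ENNReal.toReal_inv, haA, Set.inter_comm A W,
      div_eq_inv_mul]
  have hgWc : (μ[Wᶜ | A]).toReal = a2 / (a1 + a2) := by
    rw [cond_apply hA, ENNReal.toReal_mul, ENNReal.toReal_inv, haA, Set.inter_comm A Wᶜ,
      div_eq_inv_mul]
  rw [hgW, hgWc, div_mul_eq_mul_div, div_mul_eq_mul_div, ← add_div,
    div_lt_iff₀ haApos]
  nlinarith [mul_pos hε0 (by linarith : (0:ℝ) < 1 - q), mul_nonneg ha1nn (by linarith : (0:ℝ) ≤ p_H - b)]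
end

section
/- Let 0 < p_H < 1, let K > 0 be an integer, and let β > 0. Define n' = [ (1−p_H)·(2K + 4K·p_H/β) + sqrt( ((1−p_H)·(2K + 4K·p_H/β))^2 − 4·(1−p_H)^2·K^2 ) ] / ( 2·(1−p_H)^2 ). Then for every integer n ≥ n', if Y is a binomial random variable with parameters n and 1−p_H, then P(Y < K) ≤ β/(4K). -/
open MeasureTheory ProbabilityTheory

/-- Lemma 7, part 1: for `n` at least the explicit threshold `n'`, a binomial
random variable `Y ~ B(n, 1 - p_H)` satisfies `P(Y < K) ≤ β/(4K)`. -/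
theorem stmt_12 {Ω : Type*} [MeasurableSpace Ω] (μ : Measure Ω) [IsProbabilityMeasure μ]
    (p_H β : ℝ) (hpH0 : 0 < p_H) (hpH1 : p_H < 1) (hβ : 0 < β)
    (K : ℕ) (hK : 0 < K)
    (n : ℕ)
    (hn : ((1 - p_H) * (2 * K + 4 * K * p_H / β) +
        Real.sqrt (((1 - p_H) * (2 * K + 4 * K * p_H / β)) ^ 2 -
          4 * (1 - p_H) ^ 2 * (K : ℝ) ^ 2)) / (2 * (1 - p_H) ^ 2) ≤ (n : ℝ))
    (t : Fin n → Ω → ℝ)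
    (hmeas : ∀ i, Measurable (t i))
    (h01 : ∀ i ω, t i ω = 0 ∨ t i ω = 1)
    (hbern : ∀ i, μ {ω | t i ω = 1} = ENNReal.ofReal (1 - p_H))
    (hind : iIndepFun t μ) :
    μ {ω | (∑ i, t i ω) < (K : ℝ)} ≤ ENNReal.ofReal (β / (4 * K)) := by
  have hq0 : (0:ℝ) < 1 - p_H := by linarith
  set q : ℝ := 1 - p_H with hq_def
  clear_value q
  have hK' : (0:ℝ) < K := by exact_mod_cast hK
  -- Memℒp of each Bernoulli
  have hmem : ∀ i, MemLp (t i) 2 μ := fun i =>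
    MemLp.of_bound (hmeas i).aestronglyMeasurable 1
      (Filter.Eventually.of_forall fun ω => by
        rcases h01 i ω with h | h <;> simp [h])
  -- expectation of each
  have hE : ∀ i, μ[t i] = q := by
    intro i
    have hset : MeasurableSet {ω | t i ω = 1} := hmeas i (measurableSet_singleton 1)
    have hindic : t i = Set.indicator {ω | t i ω = 1} (fun _ => (1:ℝ)) := by
      funext ω
      rcases h01 i ω with h | h
      · rw [h, Set.indicator_of_notMem]
        simp only [Set.mem_setOf_eq, h]
        norm_num
      · rw [h, Set.indicator_of_mem]
        exact h
    rw [hindic, integral_indicator_const _ hset, measureReal_def, hbern i,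
      ENNReal.toReal_ofReal hq0.le, smul_eq_mul, mul_one]
  -- variance of each
  have hVar : ∀ i, variance (t i) μ = q - q ^ 2 := by
    intro i
    rw [variance_eq_sub (hmem i)]
    have hsq : (t i) ^ 2 = t i := by
      funext ω
      rcases h01 i ω with h | h <;> simp [h]
    rw [hsq, hE i]
  -- expectation and variance of the sum
  have hint : ∀ i, Integrable (t i) μ := fun i => (hmem i).integrable one_le_two
  have hmemsum : MemLp (∑ i, t i) 2 μ :=
    memLp_finsetSum' _ (fun i _ => hmem i)
  have hEsum : μ[∑ i, t i] = n * q := by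
    have h1 : μ[∑ i, t i] = ∑ i, μ[t i] := by
      simp only [Finset.sum_apply]
      exact integral_finset_sum _ (fun i _ => hint i)
    rw [h1]
    simp [hE]
  have hVarsum : variance (∑ i, t i) μ = n * (q - q ^ 2) := by
    rw [IndepFun.variance_sum (fun i _ => hmem i)
      (fun i _ j _ hij => hind.indepFun hij)]
    simp [hVar]
    ring
  -- numeric facts
  set P : ℝ := 4 * K * p_H / β with hP_def
  have hP : 0 < P := by rw [hP_def]; positivity
  have hPβ : P * β = 4 * K * p_H := by rw [hP_def]; field_simp
  clear_value P
  set B : ℝ := 2 * K + P with hB_def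
  clear_value B
  have hB2K : 2 * (K:ℝ) < B := by linarith
  have ha : 2 * q * (K:ℝ) < q * B := by
    have := mul_lt_mul_of_pos_left hB2K hq0
    linarith
  have hb : (0:ℝ) < q * B + 2 * q * K := by nlinarith
  have hD : 0 ≤ (q * B) ^ 2 - 4 * q ^ 2 * (K:ℝ) ^ 2 := by
    nlinarith [mul_pos (sub_pos.mpr ha) hb]
  have hsqrt : Real.sqrt ((q * B) ^ 2 - 4 * q ^ 2 * (K:ℝ) ^ 2) ^ 2
      = (q * B) ^ 2 - 4 * q ^ 2 * (K:ℝ) ^ 2 := Real.sq_sqrt hD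
  have hsqrt0 : 0 ≤ Real.sqrt ((q * B) ^ 2 - 4 * q ^ 2 * (K:ℝ) ^ 2) := Real.sqrt_nonneg _
  have hq2 : (0:ℝ) < 2 * q ^ 2 := by positivity
  have hn' : q * B + Real.sqrt ((q * B) ^ 2 - 4 * q ^ 2 * (K:ℝ) ^ 2) ≤ 2 * q ^ 2 * n := by
    rw [div_le_iff₀ hq2] at hn
    linarith
  -- n*q > K
  have h5 : q * (2 * K) < q * B := mul_lt_mul_of_pos_left hB2K hq0
  have h6 : q * B ≤ 2 * q ^ 2 * n := by linarith
  have h7 : q * K < q * (n * q) := by nlinarith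
  have hx : (K:ℝ) < n * q := lt_of_mul_lt_mul_left h7 hq0.le
  -- the quadratic inequality
  have h1 : Real.sqrt ((q * B) ^ 2 - 4 * q ^ 2 * (K:ℝ) ^ 2) ≤ 2 * q ^ 2 * n - q * B := by
    linarith
  have h8 : (q * B) ^ 2 - 4 * q ^ 2 * (K:ℝ) ^ 2 ≤ (2 * q ^ 2 * n - q * B) ^ 2 := by
    rw [← hsqrt]
    exact pow_le_pow_left₀ hsqrt0 h1 2
  have hquad : (0:ℝ) ≤ ((n:ℝ) * q) ^ 2 - (n * q) * B + (K:ℝ) ^ 2 := by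
    nlinarith [mul_pos hq0 hq0]
  -- the key bound
  have hc : (0:ℝ) < n * q - K := by linarith
  have hkey : n * (q - q ^ 2) / (n * q - K) ^ 2 ≤ β / (4 * K) := by
    rw [div_le_div_iff₀ (by positivity) (by positivity)]
    have h2 : 0 ≤ β * (((n:ℝ) * q) ^ 2 - (n * q) * B + (K:ℝ) ^ 2) :=
      mul_nonneg hβ.le hquad
    have e : P * β * (n * q) = 4 * K * p_H * (n * q) := by rw [hPβ]
    have hq1 : q - q ^ 2 = q * p_H := by rw [hq_def]; ring
    rw [hq1, hB_def] at *
    linarith [h2, e]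
  -- Chebyshev
  have hcheb := meas_ge_le_variance_div_sq (μ := μ) hmemsum hc
  rw [hEsum, hVarsum] at hcheb
  refine le_trans (le_trans ?_ hcheb) (ENNReal.ofReal_le_ofReal hkey)
  apply measure_mono
  intro ω hω
  simp only [Set.mem_setOf_eq] at hω ⊢
  have hsum : (∑ i, t i) ω = ∑ i, t i ω := by simp
  rw [hsum, abs_sub_comm]
  calc (n:ℝ) * q - K ≤ n * q - ∑ i, t i ω := by linarith
  _ ≤ |(n:ℝ) * q - ∑ i, t i ω| := le_abs_self _
end

section
/- Let 0 < p_L < p_H < 1, let K > 0 be an integer, and let β > 0. Define n' = [ (1−p_H)·(2K + 4K·p_H/β) + sqrt( ((1−p_H)·(2K + 4K·p_H/β))^2 − 4·(1−p_H)^2·K^2 ) ] / ( 2·(1−p_H)^2 ). Then for every integer n ≥ n', if X is a binomial random variable with parameters n and 1−p_L, then P(X < K) ≤ β/(4K). -/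
open MeasureTheory ProbabilityTheory
set_option maxHeartbeats 1000000

/-- Lemma 7, part 2: for `n` at least the explicit threshold `n'`, a binomial
random variable `X ~ B(n, 1 - p_L)` satisfies `P(Y < K) ≤ β/(4K)`. -/
theorem stmt_13 {Ω : Type*} [MeasurableSpace Ω] (μ : Measure Ω) [IsProbabilityMeasure μ]
    (p_L p_H β : ℝ) (hpL0 : 0 < p_L) (hpLH : p_L < p_H) (hpH1 : p_H < 1) (hβ : 0 < β)
    (K : ℕ) (hK : 0 < K)
    (n : ℕ)
    (hn : ((1 - p_H) * (2 * K + 4 * K * p_H / β) +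
        Real.sqrt (((1 - p_H) * (2 * K + 4 * K * p_H / β)) ^ 2 -
          4 * (1 - p_H) ^ 2 * (K : ℝ) ^ 2)) / (2 * (1 - p_H) ^ 2) ≤ (n : ℝ))
    (t : Fin n → Ω → ℝ)
    (hmeas : ∀ i, Measurable (t i))
    (h01 : ∀ i ω, t i ω = 0 ∨ t i ω = 1)
    (hbern : ∀ i, μ {ω | t i ω = 1} = ENNReal.ofReal (1 - p_L))
    (hind : iIndepFun t μ) :
    μ {ω | (∑ i, t i ω) < (K : ℝ)} ≤ ENNReal.ofReal (β / (4 * K)) := by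
  set q : ℝ := 1 - p_L with hq
  set q0 : ℝ := 1 - p_H with hq0
  set e : ℝ := 4 * K * p_H / β with he_def
  set b : ℝ := q0 * (2 * K + e) with hb_def
  have hpH0 : 0 < p_H := hpL0.trans hpLH
  have hq0pos : 0 < q0 := by simp only [hq0]; linarith
  have hqq0 : q0 < q := by simp only [hq, hq0]; linarith
  have hq1 : q < 1 := by simp only [hq]; linarith
  have hKpos : (0:ℝ) < K := by exact_mod_cast hK
  have hepos : 0 < e := by
    rw [he_def]; exact div_pos (by positivity) hβ
  have heβ : e * β = 4 * K * p_H := by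
    rw [he_def]; field_simp
  have hsnn : 0 ≤ Real.sqrt (b ^ 2 - 4 * q0 ^ 2 * (K : ℝ) ^ 2) := Real.sqrt_nonneg _
  have h1 : b + Real.sqrt (b ^ 2 - 4 * q0 ^ 2 * (K : ℝ) ^ 2) ≤ 2 * q0 ^ 2 * n := by
    rw [div_le_iff₀ (by positivity)] at hn
    linarith
  have hnK : (K:ℝ) < n * q0 := by
    have h1' : q0 * (2 * K + e) ≤ q0 * (2 * q0 * n) := by rw [← hb_def]; nlinarith
    have h2 := le_of_mul_le_mul_left h1' hq0pos
    nlinarith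
  have hc0 : 0 < (n:ℝ) * q0 - K := by linarith
  have hkey : 4 * K * p_H * (n * q0) ≤ β * (n * q0 - K)^2 := by
    have hDnn : (0:ℝ) ≤ b ^ 2 - 4 * q0 ^ 2 * (K : ℝ) ^ 2 := by
      rw [hb_def]
      nlinarith [mul_nonneg (mul_nonneg hepos.le hepos.le) (sq_nonneg q0),
        mul_nonneg (mul_nonneg (mul_nonneg hKpos.le hepos.le) hq0pos.le) hq0pos.le]
    have hsq := Real.sq_sqrt hDnn
    have h2 : Real.sqrt (b ^ 2 - 4 * q0 ^ 2 * (K : ℝ) ^ 2) ^ 2 ≤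
        (2 * q0 ^ 2 * n - b) ^ 2 :=
      pow_le_pow_left₀ hsnn (by linarith) 2
    rw [hsq] at h2
    have h3 : 0 ≤ 4 * q0 ^ 2 * (q0 ^ 2 * (n:ℝ) ^ 2 - b * n + (K:ℝ) ^ 2) := by nlinarith
    have h4 : 0 ≤ q0 ^ 2 * (n:ℝ) ^ 2 - b * n + (K:ℝ) ^ 2 := by
      have h40 := le_of_mul_le_mul_left
        (by linarith : (4 * q0 ^ 2) * 0 ≤ (4 * q0 ^ 2) * (q0 ^ 2 * (n:ℝ) ^ 2 - b * n + (K:ℝ) ^ 2))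
        (by positivity : (0:ℝ) < 4 * q0 ^ 2)
      linarith
    have expand : β * (q0 ^ 2 * (n:ℝ) ^ 2 - b * n + (K:ℝ) ^ 2) =
        β * ((n:ℝ) * q0 - K) ^ 2 - 4 * K * p_H * ((n:ℝ) * q0) := by
      rw [hb_def]; linear_combination (-(q0 * (n:ℝ))) * heβ
    nlinarith [mul_nonneg hβ.le h4]
  have hnKq : (K:ℝ) < n * q := by nlinarith
  have hkeyq : 4 * K * p_H * (n * q) ≤ β * (n * q - K)^2 := by
    have hstep : 4 * K * p_H * ((n:ℝ) * q0 - K) < β * (n * q0 - K) * (n * q0 - K) := by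
      nlinarith [mul_pos (mul_pos (mul_pos (by norm_num : (0:ℝ) < 4) hKpos) hpH0) hKpos]
    have hbig : 4 * K * p_H ≤ β * ((n:ℝ) * q0 - K) :=
      (lt_of_mul_lt_mul_right (by linarith) hc0.le).le
    have hnq : (0:ℝ) ≤ (n:ℝ) * (q - q0) := mul_nonneg (Nat.cast_nonneg n) (by linarith)
    nlinarith [mul_nonneg hnq (by linarith : (0:ℝ) ≤ β * ((n:ℝ) * q0 - K) - 4 * K * p_H),
      mul_nonneg hnq (mul_nonneg hβ.le (by linarith : (0:ℝ) ≤ (n:ℝ) * q - K))]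
  have hfinal : (n:ℝ) * q * p_L / (n * q - K)^2 ≤ β / (4 * K) := by
    rw [div_le_div_iff₀ (pow_pos (by linarith : (0:ℝ) < (n:ℝ) * q - K) 2) (by linarith : (0:ℝ) < 4 * (K:ℝ))]
    have h7 : (n:ℝ) * q * p_L * (4 * K) ≤ 4 * K * p_H * ((n:ℝ) * q) := by
      nlinarith [mul_nonneg (mul_nonneg (by positivity : (0:ℝ) ≤ 4 * (K:ℝ))
        (by nlinarith : (0:ℝ) ≤ (n:ℝ) * q)) (by linarith : (0:ℝ) ≤ p_H - p_L)]
    linarith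
  -- probabilistic part
  have hqpos : 0 < q := hq0pos.trans hqq0
  have hmem : ∀ i, MemLp (t i) 2 μ := fun i =>
    memLp_of_bounded (a := 0) (b := 1)
      (Filter.Eventually.of_forall fun ω => by
        rcases h01 i ω with h | h <;> rw [h] <;> constructor <;> norm_num)
      (hmeas i).aestronglyMeasurable 2
  have hset : ∀ i, MeasurableSet {ω | t i ω = 1} := fun i =>
    (hmeas i) (measurableSet_singleton 1)
  have hInt : ∀ i, ∫ ω, t i ω ∂μ = q := by
    intro i
    have hrepr : (fun ω => t i ω) =
        Set.indicator {ω | t i ω = 1} (fun _ => (1 : ℝ)) := by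
      funext ω
      rcases h01 i ω with h | h
      · rw [h, Set.indicator_of_notMem]
        simp only [Set.mem_setOf_eq, h]
        norm_num
      · rw [h, Set.indicator_of_mem]
        exact h
    rw [hrepr, integral_indicator_const (1 : ℝ) (hset i), measureReal_def, hbern i, smul_eq_mul, mul_one,
      ENNReal.toReal_ofReal hqpos.le]
  have hsq : ∀ i, ∫ ω, (t i ω) ^ 2 ∂μ = q := by
    intro i
    have : (fun ω => (t i ω) ^ 2) = fun ω => t i ω := by
      funext ω; rcases h01 i ω with h | h <;> rw [h] <;> norm_num
    rw [this, hInt i]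
  have hVar : ∀ i, variance (t i) μ = q * p_L := by
    intro i
    rw [variance_eq_sub (hmem i)]
    have h2 : μ[(t i) ^ 2] = q := by
      have : (t i) ^ 2 = fun ω => (t i ω) ^ 2 := by funext ω; simp
      rw [this, hsq i]
    rw [h2, hInt i]
    simp only [hq]; ring
  have hXmem : MemLp (∑ i, t i) 2 μ := memLp_finsetSum' _ fun i _ => hmem i
  have hEX : μ[∑ i, t i] = n * q := by
    have h1 : μ[∑ i, t i] = ∫ ω, ∑ i, t i ω ∂μ := by
      congr 1; funext ω; simp
    rw [h1, integral_finset_sum _ fun i _ => (hmem i).integrable one_le_two]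
    simp [hInt, mul_comm]
  have hVarX : variance (∑ i, t i) μ = n * (q * p_L) := by
    rw [IndepFun.variance_sum (fun i _ => hmem i)
      (fun i _ j _ hij => hind.indepFun hij)]
    simp [hVar]
  have hcheb := meas_ge_le_variance_div_sq (μ := μ) hXmem
    (c := (n:ℝ) * q - K) (by linarith)
  have hsub : {ω | (∑ i, t i ω) < (K : ℝ)} ⊆
      {ω | (n:ℝ) * q - K ≤ |(∑ i, t i) ω - μ[∑ i, t i]|} := by
    intro ω hω
    simp only [Set.mem_setOf_eq] at hω ⊢
    rw [hEX]
    have hXω : (∑ i, t i) ω = ∑ i, t i ω := by simp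
    rw [hXω]
    rw [abs_sub_comm]
    calc (n:ℝ) * q - K ≤ (n:ℝ) * q - ∑ i, t i ω := by linarith
      _ ≤ |(n:ℝ) * q - ∑ i, t i ω| := le_abs_self _
  calc μ {ω | (∑ i, t i ω) < (K : ℝ)}
      ≤ μ {ω | (n:ℝ) * q - K ≤ |(∑ i, t i) ω - μ[∑ i, t i]|} := measure_mono hsub
    _ ≤ ENNReal.ofReal (variance (∑ i, t i) μ / ((n:ℝ) * q - K) ^ 2) := hcheb
    _ ≤ ENNReal.ofReal (β / (4 * K)) := by
        apply ENNReal.ofReal_le_ofReal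
        rw [hVarX]
        calc (n:ℝ) * (q * p_L) / ((n:ℝ) * q - K) ^ 2
            = (n:ℝ) * q * p_L / ((n:ℝ) * q - K) ^ 2 := by ring_nf
          _ ≤ β / (4 * K) := hfinal
end

section
/- Let (Ω, P) be a probability space, let t be a random variable with 0 ≤ t ≤ 1 almost surely, let η ≥ 0 and b be real numbers, and let Y, D, A be events with P(Y ∩ A) > 0 and P(D ∩ A) > 0. Assume: (i) E(t | Y ∩ A) = E(t | D ∩ A); (ii) P(A | Y) ≥ 1 − η; (iii) P(A | D) ≥ 1 − η; and (iv) E(t | D) ≤ b. Then E(t | Y) ≤ b + 2η. -/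
open MeasureTheory ProbabilityTheory ENNReal

/-- Abstract content of Lemma 8, part 1: if conditioning on the success event `A`
equalizes the expectations given `Y` and given `D`, and `A` has conditional
probability at least `1 - η` both given `Y` and given `D`, then
`E(t | D) ≤ b` implies `E(t | Y) ≤ b + 2η`. -/
theorem stmt_15 {Ω : Type*} [MeasurableSpace Ω] (μ : Measure Ω) [IsProbabilityMeasure μ]
    (t : Ω → ℝ) (hmeas : Measurable t)
    (h01 : ∀ᵐ ω ∂μ, 0 ≤ t ω ∧ t ω ≤ 1)
    (η b : ℝ) (hη : 0 ≤ η)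
    (Y D A : Set Ω) (hYm : MeasurableSet Y) (hDm : MeasurableSet D) (hAm : MeasurableSet A)
    (hYA : 0 < μ (Y ∩ A)) (hDA : 0 < μ (D ∩ A))
    (hEq : ∫ ω, t ω ∂(μ[|Y ∩ A]) = ∫ ω, t ω ∂(μ[|D ∩ A]))
    (hAY : ENNReal.ofReal (1 - η) ≤ μ[A | Y])
    (hAD : ENNReal.ofReal (1 - η) ≤ μ[A | D])
    (hDb : ∫ ω, t ω ∂(μ[|D]) ≤ b) :
    ∫ ω, t ω ∂(μ[|Y]) ≤ b + 2 * η := by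
  -- integrability
  have hbd : ∀ᵐ ω ∂μ, ‖t ω‖ ≤ 1 := h01.mono fun ω h => by
    rw [Real.norm_eq_abs, abs_le]; exact ⟨by linarith [h.1], h.2⟩
  have hInt : Integrable t μ :=
    (integrable_const (1 : ℝ)).mono' hmeas.aestronglyMeasurable hbd
  -- conditional integral formula
  have condInt : ∀ s : Set Ω, ∫ ω, t ω ∂(μ[|s]) = (∫ ω in s, t ω ∂μ) / (μ s).toReal := by
    intro s
    rw [ProbabilityTheory.cond, integral_smul_measure, ENNReal.toReal_inv, smul_eq_mul,
      inv_mul_eq_div]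
  -- real-valued quantities
  set y := (μ Y).toReal with hy
  set yA := (μ (Y ∩ A)).toReal with hyA
  set d := (μ D).toReal with hd
  set dA := (μ (D ∩ A)).toReal with hdA
  set IY := ∫ ω in Y, t ω ∂μ with hIY
  set IYA := ∫ ω in Y ∩ A, t ω ∂μ with hIYA
  set ID := ∫ ω in D, t ω ∂μ with hID
  set IDA := ∫ ω in D ∩ A, t ω ∂μ with hIDA
  have hYAne : μ (Y ∩ A) ≠ ∞ := measure_ne_top μ _
  have hDAne : μ (D ∩ A) ≠ ∞ := measure_ne_top μ _
  have hyA0 : 0 < yA := ENNReal.toReal_pos hYA.ne' hYAne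
  have hdA0 : 0 < dA := ENNReal.toReal_pos hDA.ne' hDAne
  have hyAy : yA ≤ y := ENNReal.toReal_mono (measure_ne_top μ _)
    (measure_mono Set.inter_subset_left)
  have hdAd : dA ≤ d := ENNReal.toReal_mono (measure_ne_top μ _)
    (measure_mono Set.inter_subset_left)
  have hy0 : 0 < y := lt_of_lt_of_le hyA0 hyAy
  have hd0 : 0 < d := lt_of_lt_of_le hdA0 hdAd
  -- conditional probability bounds in reals
  have hYfrac : (1 - η) * y ≤ yA := by
    have h1 : μ[A|Y] = (μ Y)⁻¹ * μ (Y ∩ A) := cond_apply hYm μ A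
    have hfin : (μ Y)⁻¹ * μ (Y ∩ A) ≠ ∞ :=
      ENNReal.mul_ne_top (ENNReal.inv_ne_top.mpr (lt_of_lt_of_le hYA (measure_mono Set.inter_subset_left)).ne') hYAne
    have h2 : (1 - η) ≤ ((μ Y)⁻¹ * μ (Y ∩ A)).toReal :=
      (ENNReal.ofReal_le_iff_le_toReal hfin).mp (h1 ▸ hAY)
    rw [ENNReal.toReal_mul, ENNReal.toReal_inv, inv_mul_eq_div] at h2
    exact (le_div_iff₀ hy0).mp h2
  have hDfrac : (1 - η) * d ≤ dA := by
    have h1 : μ[A|D] = (μ D)⁻¹ * μ (D ∩ A) := cond_apply hDm μ A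
    have hfin : (μ D)⁻¹ * μ (D ∩ A) ≠ ∞ :=
      ENNReal.mul_ne_top (ENNReal.inv_ne_top.mpr (lt_of_lt_of_le hDA (measure_mono Set.inter_subset_left)).ne') hDAne
    have h2 : (1 - η) ≤ ((μ D)⁻¹ * μ (D ∩ A)).toReal :=
      (ENNReal.ofReal_le_iff_le_toReal hfin).mp (h1 ▸ hAD)
    rw [ENNReal.toReal_mul, ENNReal.toReal_inv, inv_mul_eq_div] at h2
    exact (le_div_iff₀ hd0).mp h2
  -- integral bounds
  have hnn : ∀ s : Set Ω, MeasurableSet s → 0 ≤ ∫ ω in s, t ω ∂μ := fun s hs =>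
    setIntegral_nonneg_ae hs (h01.mono fun ω h _ => h.1)
  have hub : ∀ s : Set Ω, MeasurableSet s → ∫ ω in s, t ω ∂μ ≤ (μ s).toReal := by
    intro s hs
    calc ∫ ω in s, t ω ∂μ ≤ ∫ _ω in s, (1 : ℝ) ∂μ := by
          refine setIntegral_mono_ae hInt.integrableOn (integrable_const 1).integrableOn ?_
          exact h01.mono fun ω h => h.2
      _ = (μ s).toReal := by simp; rfl
  have hIYsplit : IY ≤ IYA + (y - yA) := by
    have hsplit : IY = IYA + ∫ ω in Y \ A, t ω ∂μ := by
      rw [hIY, hIYA, ← setIntegral_union (Set.disjoint_sdiff_right.mono_left Set.inter_subset_right)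
        (hYm.diff hAm) hInt.integrableOn hInt.integrableOn, Set.inter_union_diff]
    have hdiff : ∫ ω in Y \ A, t ω ∂μ ≤ y - yA := by
      have := hub (Y \ A) (hYm.diff hAm)
      have hm : μ (Y ∩ A) + μ (Y \ A) = μ Y := measure_inter_add_diff Y hAm
      have : (μ (Y \ A)).toReal = y - yA := by
        rw [hy, hyA, ← hm, ENNReal.toReal_add hYAne (measure_ne_top μ _)]; ring
      linarith [hub (Y \ A) (hYm.diff hAm)]
    linarith
  have hIDAle : IDA ≤ ID := by
    rw [hIDA, hID]
    refine setIntegral_mono_set hInt.integrableOn (ae_restrict_of_ae (h01.mono fun ω h => h.1)) ?_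
    exact HasSubset.Subset.eventuallyLE Set.inter_subset_left
  -- rewrite conditional expectations
  rw [condInt] at hEq hDb ⊢
  rw [condInt] at hEq
  -- now: hEq : IYA / yA = IDA / dA, hDb : ID / d ≤ b, goal : IY / y ≤ b + 2η
  have hIYA0 : 0 ≤ IYA := hnn _ (hYm.inter hAm)
  have hIDA0 : 0 ≤ IDA := hnn _ (hDm.inter hAm)
  have hID0 : 0 ≤ ID := hnn _ hDm
  have hIDAub : IDA ≤ dA := hub _ (hDm.inter hAm)
  -- key: IDA / dA ≤ b + η
  have hq : IDA / dA ≤ b + η := by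
    rw [div_le_iff₀ hdA0]
    have h1 : ID ≤ b * d := by
      have := (div_le_iff₀ hd0).mp hDb; linarith
    nlinarith [mul_le_mul_of_nonneg_left hDfrac hIDA0]
  have hIYAle : IYA ≤ (b + η) * yA := by
    have := (div_le_iff₀ hyA0).mp (hEq ▸ hq)
    linarith
  have hb0 : 0 ≤ b + η := by
    have : 0 ≤ ID / d := div_nonneg hID0 hd0.le
    linarith
  rw [div_le_iff₀ hy0]
  nlinarith [mul_le_mul_of_nonneg_left hyAy hb0]
end
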